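/- arXiv:1503.02432 — 5 statements merged into one kernel-verified Lean document; each statement's English description precedes it below -/
import Mathlib

section
/- Let n > 2 be an integer and m = (n-2)/2. Let g : [0,∞) × ℝ → ℝ be C¹ with g(0,s) = 0 for all s, and set G(y₁, s) = ∫₀^{y₁} g(a, s) da. If (y₁, y₂) : I → (0,∞) × ℝ is a C¹ solution on an interval I of the system ẏ₁ = m·y₁ + y₂, ẏ₂ = -m·y₂ - g(y₁, s), then for every s ∈ I the function s ↦ m·y₁(s)·y₂(s) + y₂(s)²/2 + G(y₁(s), s) is differentiable and its derivative equals (∂G/∂s)(y₁(s), s) = ∫₀^{y₁(s)} (∂g/∂s)(a, s) da. (This is the Pohozaev-type identity: H is non-decreasing, respectively non-increasing, along trajectories whenever G(y₁, ·) is non-decreasing, respectively non-increasing, in s.) -/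
open Real Filter Set MeasureTheory

noncomputable section

namespace Paper

def mExp (l : ℝ) : ℝ := 2 / (l - 2)

def twoStar (n : ℕ) : ℝ := 2 * (n : ℝ) / ((n : ℝ) - 2)

def twoLow (n : ℕ) : ℝ := 2 * ((n : ℝ) - 1) / ((n : ℝ) - 2)

def Aexp (n : ℕ) (l : ℝ) : ℝ := (n : ℝ) - 2 - 2 * mExp l

def Cexp (n : ℕ) (l : ℝ) : ℝ := mExp l * ((n : ℝ) - 2 - mExp l)

/-- The Fowler transform `g(y₁, s; l)` of the nonlinearity `f`. -/
def fowlerG (f : ℝ → ℝ → ℝ) (l y s : ℝ) : ℝ :=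
  f (y * Real.exp (-(mExp l) * s)) (Real.exp s) * Real.exp ((mExp l + 2) * s)

/-- `G(y₁, s; l) = ∫₀^{y₁} g(a, s; l) da`. -/
def Gprim (f : ℝ → ℝ → ℝ) (l y s : ℝ) : ℝ := ∫ a in (0:ℝ)..y, fowlerG f l a s

/-- `U` (with derivative `U'`) solves `U'' + ((n-1)/r) U' + f(U, r) = 0` on `S`. -/
def SolOn (n : ℕ) (f : ℝ → ℝ → ℝ) (U U' : ℝ → ℝ) (S : Set ℝ) : Prop :=
  ∀ r ∈ S, HasDerivAt U (U' r) r ∧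
    HasDerivAt U' (-(((n : ℝ) - 1) / r * U' r + f (U r) r)) r

/-- `U` is a regular solution with `U(0) = α` (C¹ up to the origin, `U'(0)=0`). -/
def RegularSol (n : ℕ) (f : ℝ → ℝ → ℝ) (U U' : ℝ → ℝ) (α : ℝ) : Prop :=
  SolOn n f U U' (Set.Ioi 0) ∧ ContinuousOn U (Set.Ici 0) ∧
    ContinuousOn U' (Set.Ici 0) ∧ U 0 = α ∧ U' 0 = 0

def SingularAtZero (U : ℝ → ℝ) : Prop :=
  Tendsto U (nhdsWithin 0 (Set.Ioi 0)) atTop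

def FastDecayTo (n : ℕ) (U : ℝ → ℝ) (β : ℝ) : Prop :=
  Tendsto (fun r => r ^ ((n : ℝ) - 2) * U r) atTop (nhds β)

def SlowDecay (n : ℕ) (U : ℝ → ℝ) : Prop :=
  Tendsto (fun r => r ^ ((n : ℝ) - 2) * U r) atTop atTop

/-- Condition (F0). -/
def CondF0 (f : ℝ → ℝ → ℝ) : Prop :=
  (∀ p : ℝ × ℝ, 0 ≤ p.1 → 0 < p.2 → ∃ K ε : ℝ, 0 < ε ∧
      ∀ a b : ℝ × ℝ, 0 ≤ a.1 → 0 < a.2 → 0 ≤ b.1 → 0 < b.2 →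
        dist a p < ε → dist b p < ε → |f a.1 a.2 - f b.1 b.2| ≤ K * dist a b) ∧
    (∀ r : ℝ, 0 < r → f 0 r = 0) ∧
    (∀ u r : ℝ, 0 < u → 0 < r → 0 < f u r) ∧
    (∀ r : ℝ, 0 < r → MonotoneOn (fun u => f u r) (Set.Ici 0)) ∧
    (∀ u : ℝ, 0 < u → ∃ C : ℝ, ∀ r : ℝ, 0 < r → r ≤ 1 → f u r * r ^ 2 ≤ C)

/-- Condition (G0) for an autonomous nonlinearity `h`. -/
def CondG0 (h : ℝ → ℝ) : Prop :=
  (∃ h' : ℝ → ℝ, (∀ y : ℝ, 0 < y → HasDerivAt h (h' y) y) ∧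
      ContinuousOn h' (Set.Ioi 0) ∧ StrictMonoOn h' (Set.Ioi 0)) ∧
    Tendsto (fun y => h y / y) (nhdsWithin 0 (Set.Ioi 0)) (nhds 0) ∧
    Tendsto (fun y => h y / y) atTop atTop

/-- `h` is locally Lipschitz on `(0, ∞)`. -/
def LocLip (h : ℝ → ℝ) : Prop :=
  ∀ y : ℝ, 0 < y → ∃ K ε : ℝ, 0 < ε ∧ ∀ a b : ℝ, |a - y| < ε → |b - y| < ε →
    |h a - h b| ≤ K * |a - b|

/-- Condition (Gu), with the autonomous limit `gneg = g^{-∞}` given explicitly. -/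
def CondGuWith (n : ℕ) (f : ℝ → ℝ → ℝ) (lu : ℝ) (gneg : ℝ → ℝ) : Prop :=
  twoLow n < lu ∧
    (∀ K : Set ℝ, IsCompact K → K ⊆ Set.Ioi 0 →
      TendstoUniformlyOn (fun s y => fowlerG f lu y s) gneg atBot K) ∧
    LocLip gneg ∧ (∃ y : ℝ, 0 < y ∧ gneg y ≠ 0) ∧ CondG0 gneg ∧
    (∃ ϖ : ℝ, 0 < ϖ ∧ ∀ y : ℝ, 0 < y →
      Tendsto (fun s => Real.exp (-ϖ * s) * deriv (fun t => fowlerG f lu y t) s)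
        atBot (nhds 0)) ∧
    (lu = twoStar n → ∃ M : ℝ, 0 < M ∧ ∀ y : ℝ, 0 < y →
      MonotoneOn (fun s => fowlerG f lu y s) (Set.Iio (-M)) ∨
        AntitoneOn (fun s => fowlerG f lu y s) (Set.Iio (-M)))

/-- Condition (Gu). -/
def CondGu (n : ℕ) (f : ℝ → ℝ → ℝ) (lu : ℝ) : Prop :=
  ∃ gneg : ℝ → ℝ, CondGuWith n f lu gneg

/-- Condition (Gs), with the autonomous limit `gplus = g^{+∞}` given explicitly. -/
def CondGsWith (n : ℕ) (f : ℝ → ℝ → ℝ) (ls : ℝ) (gplus : ℝ → ℝ) : Prop :=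
  twoLow n < ls ∧
    (∀ K : Set ℝ, IsCompact K → K ⊆ Set.Ioi 0 →
      TendstoUniformlyOn (fun s y => fowlerG f ls y s) gplus atTop K) ∧
    LocLip gplus ∧ (∃ y : ℝ, 0 < y ∧ gplus y ≠ 0) ∧ CondG0 gplus ∧
    (∃ ϖ : ℝ, 0 < ϖ ∧ ∀ y : ℝ, 0 < y →
      Tendsto (fun s => Real.exp (ϖ * s) * deriv (fun t => fowlerG f ls y t) s)
        atTop (nhds 0)) ∧
    (ls = twoStar n → ∃ M : ℝ, 0 < M ∧ ∀ y : ℝ, 0 < y →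
      MonotoneOn (fun s => fowlerG f ls y s) (Set.Ioi M) ∨
        AntitoneOn (fun s => fowlerG f ls y s) (Set.Ioi M))

/-- Condition (Gs). -/
def CondGs (n : ℕ) (f : ℝ → ℝ → ℝ) (ls : ℝ) : Prop :=
  ∃ gplus : ℝ → ℝ, CondGsWith n f ls gplus

/-- Condition (A⁺): `G(y₁, ·; 2^*)` is non-decreasing, strictly somewhere. -/
def CondAplus (n : ℕ) (f : ℝ → ℝ → ℝ) : Prop :=
  (∀ y : ℝ, 0 < y → Monotone (fun s => Gprim f (twoStar n) y s)) ∧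
    ∃ y : ℝ, 0 < y ∧ ∃ s₁ s₂ : ℝ, s₁ < s₂ ∧
      Gprim f (twoStar n) y s₁ < Gprim f (twoStar n) y s₂

/-- Condition (A⁻): `G(y₁, ·; 2^*)` is non-increasing, strictly somewhere. -/
def CondAminus (n : ℕ) (f : ℝ → ℝ → ℝ) : Prop :=
  (∀ y : ℝ, 0 < y → Antitone (fun s => Gprim f (twoStar n) y s)) ∧
    ∃ y : ℝ, 0 < y ∧ ∃ s₁ s₂ : ℝ, s₁ < s₂ ∧
      Gprim f (twoStar n) y s₂ < Gprim f (twoStar n) y s₁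

/-- The heat semigroup `e^{tΔ}` applied to `φ`. -/
def heatOp (n : ℕ) (t : ℝ) (φ : EuclideanSpace ℝ (Fin n) → ℝ)
    (x : EuclideanSpace ℝ (Fin n)) : ℝ :=
  (4 * Real.pi * t) ^ (-(n : ℝ) / 2) * ∫ y, Real.exp (-‖x - y‖ ^ 2 / (4 * t)) * φ y

/-- A global `C_B`-mild solution of `∂ₜ u = Δu + f(u, |x|)`, `u(·,0) = φ`. -/
def CBMildGlobal (n : ℕ) (f : ℝ → ℝ → ℝ) (φ : EuclideanSpace ℝ (Fin n) → ℝ)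
    (u : ℝ → EuclideanSpace ℝ (Fin n) → ℝ) : Prop :=
  (∀ x, u 0 x = φ x) ∧
    (∀ T : ℝ, 0 < T →
      ContinuousOn (fun p : EuclideanSpace ℝ (Fin n) × ℝ => u p.2 p.1)
        (Set.univ ×ˢ Set.Icc 0 T) ∧
      ∃ M : ℝ, ∀ t ∈ Set.Icc (0:ℝ) T, ∀ x, |u t x| ≤ M) ∧
    ∀ t : ℝ, 0 < t → ∀ x, u t x =
      heatOp n t φ x + ∫ s in (0:ℝ)..t, heatOp n (t - s) (fun y => f (u s y) ‖y‖) x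

/-- The weight `w(x)`. -/
def weightW (n : ℕ) (ν a : ℝ) (x : EuclideanSpace ℝ (Fin n)) : ℝ :=
  if ‖x‖ ≤ 1 then ‖x‖ ^ ν else ‖x‖ ^ a

/-- The weighted `L^∞` norm `‖φ‖_X = ‖φ · w‖_∞`. -/
def XNorm (n : ℕ) (ν a : ℝ) (φ : EuclideanSpace ℝ (Fin n) → ℝ) : ENNReal :=
  essSup (fun x => ENNReal.ofReal (|φ x| * weightW n ν a x)) volume

/-- The mild (Duhamel) equation on `(ℝⁿ \ {0}) × [0, T]`. -/
def MildEq (n : ℕ) (f : ℝ → ℝ → ℝ) (φ : EuclideanSpace ℝ (Fin n) → ℝ)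
    (u : ℝ → EuclideanSpace ℝ (Fin n) → ℝ) (T : ℝ) : Prop :=
  (∀ x : EuclideanSpace ℝ (Fin n), x ≠ 0 → u 0 x = φ x) ∧
    ∀ t : ℝ, 0 < t → t ≤ T → ∀ x : EuclideanSpace ℝ (Fin n), x ≠ 0 →
      u t x = heatOp n t φ x +
        ∫ s in (0:ℝ)..t, heatOp n (t - s) (fun y => f (u s y) ‖y‖) x

/-- A mild solution on `[0,T]` with weighted norm bounded by `ρ`. -/
def MildSol (n : ℕ) (f : ℝ → ℝ → ℝ) (ν a : ℝ) (φ : EuclideanSpace ℝ (Fin n) → ℝ)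
    (ρ T : ℝ) (u : ℝ → EuclideanSpace ℝ (Fin n) → ℝ) : Prop :=
  MildEq n f φ u T ∧ ∀ t ∈ Set.Icc (0:ℝ) T, XNorm n ν a (u t) ≤ ENNReal.ofReal ρ

end Paper

open intervalIntegral Metric Topology

/-- the Pohozaev-type identity for the Fowler system at the critical exponent:
along trajectories, `d/ds H(y₁(s), y₂(s), s) = (∂G/∂s)(y₁(s), s)`. -/
theorem pohozaev_identity_along_trajectories
    (n : ℕ) (hn : 2 < n) (m : ℝ) (hm : m = ((n : ℝ) - 2) / 2)
    (g : ℝ → ℝ → ℝ)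
    (hg : ContDiff ℝ 1 (fun p : ℝ × ℝ => g p.1 p.2))
    (hg0 : ∀ s : ℝ, g 0 s = 0)
    (I : Set ℝ) (y₁ y₂ : ℝ → ℝ)
    (hpos : ∀ s ∈ I, 0 < y₁ s)
    (hsys : ∀ s ∈ I,
      HasDerivAt y₁ (m * y₁ s + y₂ s) s ∧
      HasDerivAt y₂ (-(m * y₂ s) - g (y₁ s) s) s) :
    ∀ s ∈ I,
      HasDerivAt
        (fun t => m * y₁ t * y₂ t + y₂ t ^ 2 / 2 + ∫ a in (0:ℝ)..(y₁ t), g a t)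
        (∫ a in (0:ℝ)..(y₁ s), deriv (fun t => g a t) s) s := by
  intro s hs
  obtain ⟨hy₁', hy₂'⟩ := hsys s hs
  set x₀ := y₁ s with hx₀
  set G : ℝ × ℝ → ℝ := fun p => g p.1 p.2 with hGdef
  have hGc : Continuous G := hg.continuous
  have hGd : Differentiable ℝ G := hg.differentiable one_ne_zero
  have hcont : ∀ t : ℝ, Continuous fun a => g a t := fun t =>
    hGc.comp (continuous_id.prodMk continuous_const)
  set gt : ℝ → ℝ → ℝ := fun a t => fderiv ℝ G (a, t) (0, 1) with hgt_def
  have hgt : ∀ a t : ℝ, HasDerivAt (fun τ => g a τ) (gt a t) t := by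
    intro a t
    exact (hGd (a, t)).hasFDerivAt.comp_hasDerivAt t
      ((hasDerivAt_const t a).prodMk (hasDerivAt_id t))
  have hgtc : Continuous (fun p : ℝ × ℝ => gt p.1 p.2) := by
    have := (hg.continuous_fderiv one_ne_zero).clm_apply (continuous_const (y := ((0:ℝ),(1:ℝ))))
    simpa [hgt_def] using this
  -- Part Ψ : derivative in the parameter
  have hΨ : HasDerivAt (fun t => ∫ a in (0:ℝ)..x₀, g a t)
      (∫ a in (0:ℝ)..x₀, gt a s) s := by
    obtain ⟨C, hC⟩ : ∃ C, ∀ p ∈ (uIcc (0:ℝ) x₀) ×ˢ Icc (s-1) (s+1), ‖gt p.1 p.2‖ ≤ C :=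
      (isCompact_uIcc.prod isCompact_Icc).exists_bound_of_continuousOn hgtc.continuousOn
    have key := intervalIntegral.hasDerivAt_integral_of_dominated_loc_of_deriv_le
      (F := fun t a => g a t) (F' := fun t a => gt a t) (x₀ := s) (a := (0:ℝ)) (b := x₀)
      (bound := fun _ => C) (μ := volume) (s := ball s 1) (ball_mem_nhds s one_pos)
      (Eventually.of_forall fun t => (hcont t).aestronglyMeasurable)
      ((hcont s).intervalIntegrable _ _)
      ((hgtc.comp (continuous_id.prodMk continuous_const)).aestronglyMeasurable)
      (Eventually.of_forall fun a ha t ht => by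
        refine hC (a, t) ⟨uIoc_subset_uIcc ha, ?_⟩
        have := mem_ball_iff_norm.mp ht
        simp only [Real.norm_eq_abs] at this
        constructor <;> [linarith [neg_abs_le (t - s)]; linarith [le_abs_self (t - s)]])
      intervalIntegrable_const
      (Eventually.of_forall fun a _ t _ => hgt a t)
    exact key.2
  -- Part Ξ : FTC composed with y₁
  have hΞ : HasDerivAt (fun t => ∫ a in x₀..y₁ t, g a s)
      (g x₀ s * (m * y₁ s + y₂ s)) s := by
    have hFTC : HasDerivAt (fun x => ∫ a in x₀..x, g a s) (g x₀ s) x₀ :=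
      intervalIntegral.integral_hasDerivAt_right ((hcont s).intervalIntegrable _ _)
        ((hcont s).stronglyMeasurableAtFilter _ _) (hcont s).continuousAt
    exact hFTC.comp s hy₁'
  -- Part R : remainder has derivative 0
  have hR : HasDerivAt (fun t => ∫ a in x₀..y₁ t, (g a t - g a s)) 0 s := by
    set B : Set (ℝ × ℝ) := Icc (x₀-1) (x₀+1) ×ˢ Icc (s-1) (s+1) with hB
    obtain ⟨C, hC⟩ : ∃ C, ∀ p ∈ B, ‖fderiv ℝ G p‖ ≤ C :=
      (isCompact_Icc.prod isCompact_Icc).exists_bound_of_continuousOn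
        (hg.continuous_fderiv one_ne_zero).continuousOn
    set K : NNReal := Real.toNNReal C with hK
    have hLip : LipschitzOnWith K G B := by
      apply (convex_Icc _ _ |>.prod (convex_Icc _ _)).lipschitzOnWith_of_nnnorm_fderiv_le
        (fun p _ => hGd p)
      intro p hp
      rw [← Real.toNNReal_coe (r := ‖fderiv ℝ G p‖₊)]
      exact Real.toNNReal_le_toNNReal (hC p hp)
    have hy₁c : ContinuousAt y₁ s := hy₁'.continuousAt
    have ht0 : Tendsto (fun t => |y₁ t - x₀|) (𝓝 s) (𝓝 0) := by
      have h' : Tendsto (fun t => y₁ t - x₀) (𝓝 s) (𝓝 (y₁ s - x₀)) :=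
        hy₁c.tendsto.sub (tendsto_const_nhds (x := x₀))
      have := h'.abs
      simpa [hx₀] using this
    have hev : ∀ᶠ t in 𝓝 s, |y₁ t - x₀| ≤ 1 ∧ |t - s| ≤ 1 := by
      have h1 : ∀ᶠ t in 𝓝 s, |y₁ t - x₀| ≤ 1 := ht0.eventually_le_const one_pos
      have h2 : ∀ᶠ t in 𝓝 s, |t - s| ≤ 1 := by
        have : ∀ᶠ t in 𝓝 s, t ∈ Icc (s-1) (s+1) := Icc_mem_nhds (by linarith) (by linarith)
        filter_upwards [this] with t ht
        rw [abs_le]; exact ⟨by linarith [ht.1], by linarith [ht.2]⟩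
      exact h1.and h2
    have hbound : ∀ᶠ t in 𝓝 s, ‖∫ a in x₀..y₁ t, (g a t - g a s)‖ ≤ (K * |t - s|) * |y₁ t - x₀| := by
      filter_upwards [hev] with t ⟨ht1, ht2⟩
      have habs : |y₁ t - x₀| = |y₁ t - x₀| := rfl
      refine (intervalIntegral.norm_integral_le_of_norm_le_const ?_).trans_eq (by rw [abs_sub_comm])
      intro a ha
      have haI : a ∈ Icc (x₀-1) (x₀+1) := by
        have := uIoc_subset_uIcc ha
        rcases mem_uIcc.mp this with ⟨h1, h2⟩ | ⟨h1, h2⟩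
        · constructor
          · linarith
          · have : y₁ t ≤ x₀ + 1 := by cases abs_le.mp ht1 with | intro h h' => linarith
            linarith
        · constructor
          · have : x₀ - 1 ≤ y₁ t := by cases abs_le.mp ht1 with | intro h h' => linarith
            linarith
          · linarith
      have hmem1 : ((a, t) : ℝ × ℝ) ∈ B := ⟨haI, by
        rw [mem_Icc]; cases abs_le.mp ht2 with | intro h h' => constructor <;> linarith⟩
      have hmem2 : ((a, s) : ℝ × ℝ) ∈ B := ⟨haI, by rw [mem_Icc]; constructor <;> linarith⟩
      have := hLip.dist_le_mul (a, t) hmem1 (a, s) hmem2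
      simp only [Prod.dist_eq, Real.dist_eq, sub_self, abs_zero] at this
      calc ‖g a t - g a s‖ = dist (G (a, t)) (G (a, s)) := by
            simp [hGdef, Real.dist_eq, Real.norm_eq_abs]
        _ ≤ K * (0 ⊔ |t - s|) := this
        _ = K * |t - s| := by rw [sup_eq_right.mpr (abs_nonneg _)]
    rw [hasDerivAt_iff_tendsto_slope]
    have hslope : ∀ᶠ t in 𝓝[≠] s,
        ‖slope (fun t => ∫ a in x₀..y₁ t, (g a t - g a s)) s t‖ ≤ K * |y₁ t - x₀| := by
      filter_upwards [nhdsWithin_le_nhds hbound, self_mem_nhdsWithin] with t hb (htne : t ≠ s)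
      rw [slope_def_field]
      have h0 : (∫ a in x₀..y₁ s, (g a s - g a s)) = 0 := by simp [hx₀]
      rw [hx₀] at h0
      have hts : |t - s| ≠ 0 := by simp [sub_eq_zero, htne]
      rw [div_eq_mul_inv, norm_mul, norm_inv, Real.norm_eq_abs, Real.norm_eq_abs (t - s)]
      rw [h0, sub_zero]
      rw [Real.norm_eq_abs] at hb
      calc |∫ a in x₀..y₁ t, (g a t - g a s)| * |t - s|⁻¹
          ≤ ((K * |t - s|) * |y₁ t - x₀|) * |t - s|⁻¹ := by
            apply mul_le_mul_of_nonneg_right hb (by positivity)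
        _ = K * |y₁ t - x₀| * (|t - s| * |t - s|⁻¹) := by ring
        _ = K * |y₁ t - x₀| := by
            rw [mul_inv_cancel₀ hts, mul_one]
    have hlim : Tendsto (fun t => (K : ℝ) * |y₁ t - x₀|) (𝓝[≠] s) (𝓝 0) := by
      have := (ht0.const_mul (K : ℝ)).mono_left (nhdsWithin_le_nhds (s := {s}ᶜ))
      simpa using this
    exact squeeze_zero_norm' hslope hlim
  -- combine
  have h₁ : HasDerivAt (fun t => m * y₁ t * y₂ t)
      (m * (m * y₁ s + y₂ s) * y₂ s + m * y₁ s * (-(m * y₂ s) - g (y₁ s) s)) s :=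
    (hy₁'.const_mul m).mul hy₂'
  have h₂ : HasDerivAt (fun t => y₂ t ^ 2 / 2)
      ((2 * y₂ s ^ 1 * (-(m * y₂ s) - g (y₁ s) s)) / 2) s := (hy₂'.pow 2).div_const 2
  have hsum := (h₁.add h₂).add (hΨ.add (hΞ.add hR))
  have hfun : ∀ t : ℝ,
      (m * y₁ t * y₂ t + y₂ t ^ 2 / 2) +
        ((∫ a in (0:ℝ)..x₀, g a t) +
          ((∫ a in x₀..y₁ t, g a s) + ∫ a in x₀..y₁ t, (g a t - g a s)))
      = m * y₁ t * y₂ t + y₂ t ^ 2 / 2 + ∫ a in (0:ℝ)..(y₁ t), g a t := by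
    intro t
    have i1 : IntervalIntegrable (fun a => g a s) volume x₀ (y₁ t) :=
      (hcont s).intervalIntegrable _ _
    have i2 : IntervalIntegrable (fun a => g a t - g a s) volume x₀ (y₁ t) :=
      ((hcont t).sub (hcont s)).intervalIntegrable _ _
    rw [← intervalIntegral.integral_add i1 i2]
    simp only [add_sub_cancel]
    rw [intervalIntegral.integral_add_adjacent_intervals
      ((hcont t).intervalIntegrable _ _) ((hcont t).intervalIntegrable _ _)]
  have hEq : (∫ a in (0:ℝ)..x₀, deriv (fun t => g a t) s) = ∫ a in (0:ℝ)..x₀, gt a s :=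
    intervalIntegral.integral_congr fun a _ => (hgt a s).deriv
  rw [hx₀] at hEq ⊢
  rw [hEq]
  have := hsum.congr_of_eventuallyEq (Eventually.of_forall fun t => (hfun t).symm)
  refine this.congr_deriv ?_
  rw [hx₀]
  ring
end
end

section
/- Let B > 0, ε ∈ (0, B) and S ∈ ℝ. Let h : [S,∞) → ℝ be C² and N : [S,∞) → ℝ continuous, with h''(s) + B·h(s) + N(s) = 0 for all s ≥ S, |N(s)| ≤ ε·|h(s)| for all s ≥ S, and (h(s), h'(s)) ≠ (0,0) for all s ≥ S. Then h changes sign infinitely often as s → +∞: for every T ≥ S there exist s₁, s₂ > T with h(s₁) > 0 and h(s₂) < 0. -/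
open Real Filter Set MeasureTheory

noncomputable section

private lemma antiOn_of_deriv_nonpos' {f f' : ℝ → ℝ} {a : ℝ}
    (hf : ∀ x ∈ Set.Ici a, HasDerivAt f (f' x) x)
    (hf' : ∀ x ∈ Set.Ici a, f' x ≤ 0) :
    AntitoneOn f (Set.Ici a) := by
  refine antitoneOn_of_deriv_nonpos (convex_Ici a)
    (fun x hx => (hf x hx).continuousAt.continuousWithinAt) ?_ ?_ <;>
    intro x hx <;> rw [interior_Ici] at hx
  · exact (hf x (Set.mem_Ici.mpr (Set.mem_Ioi.mp hx).le)).differentiableAt.differentiableWithinAt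
  · rw [(hf x (Set.mem_Ici.mpr (Set.mem_Ioi.mp hx).le)).deriv]; exact hf' x (Set.mem_Ici.mpr (Set.mem_Ioi.mp hx).le)

private lemma monoOn_of_deriv_nonneg' {f f' : ℝ → ℝ} {a : ℝ}
    (hf : ∀ x ∈ Set.Ici a, HasDerivAt f (f' x) x)
    (hf' : ∀ x ∈ Set.Ici a, 0 ≤ f' x) :
    MonotoneOn f (Set.Ici a) := by
  refine monotoneOn_of_deriv_nonneg (convex_Ici a)
    (fun x hx => (hf x hx).continuousAt.continuousWithinAt) ?_ ?_ <;>
    intro x hx <;> rw [interior_Ici] at hx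
  · exact (hf x (Set.mem_Ici.mpr (Set.mem_Ioi.mp hx).le)).differentiableAt.differentiableWithinAt
  · rw [(hf x (Set.mem_Ici.mpr (Set.mem_Ioi.mp hx).le)).deriv]; exact hf' x (Set.mem_Ici.mpr (Set.mem_Ioi.mp hx).le)

private lemma neg_somewhere
    (B ε S : ℝ) (hB : 0 < B) (hε0 : 0 < ε) (hεB : ε < B)
    (h h' N : ℝ → ℝ)
    (hode1 : ∀ s : ℝ, S ≤ s → HasDerivAt h (h' s) s)
    (hode2 : ∀ s : ℝ, S ≤ s → HasDerivAt h' (-(B * h s + N s)) s)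
    (hN : ∀ s : ℝ, S ≤ s → |N s| ≤ ε * |h s|)
    (hnz : ∀ s : ℝ, S ≤ s → ¬(h s = 0 ∧ h' s = 0))
    (T : ℝ) (hTS : S ≤ T) :
    ∃ s : ℝ, T < s ∧ h s < 0 := by
  by_contra hcon
  push_neg at hcon
  set a := T + 1 with ha
  have haS : S ≤ a := by linarith
  have hpos : ∀ s : ℝ, a ≤ s → 0 ≤ h s := fun s hs => hcon s (by linarith)
  have hSs : ∀ s : ℝ, a ≤ s → S ≤ s := fun s hs => le_trans haS hs
  -- bound on N : -ε h ≤ N ≤ ε h on Ici a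
  have hNb : ∀ s : ℝ, a ≤ s → -(ε * h s) ≤ N s ∧ N s ≤ ε * h s := by
    intro s hs
    have := hN s (hSs s hs)
    rw [abs_of_nonneg (hpos s hs)] at this
    exact ⟨neg_le_of_abs_le this, le_of_abs_le this⟩
  -- h'' ≤ 0 on Ici a, so h' antitone
  have hdd_le : ∀ s : ℝ, a ≤ s → -(B * h s + N s) ≤ 0 := by
    intro s hs
    have h1 := (hNb s hs).1
    have h2 := hpos s hs
    nlinarith
  have hanti : AntitoneOn h' (Set.Ici a) :=
    antiOn_of_deriv_nonpos' (fun x hx => hode2 x (hSs x hx)) (fun x hx => hdd_le x hx)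
  -- h' ≥ 0 on Ici a
  have hd_nonneg : ∀ s : ℝ, a ≤ s → 0 ≤ h' s := by
    intro s0 hs0
    by_contra hneg
    push_neg at hneg
    set c := -h' s0 with hc
    have hc0 : 0 < c := by simp [hc]; linarith
    -- φ = h + c • id is antitone on Ici s0
    have hφ : AntitoneOn (fun s => h s + c * s) (Set.Ici s0) := by
      apply antiOn_of_deriv_nonpos' (f' := fun s => h' s + c)
      · intro x hx
        exact (hode1 x (le_trans (hSs s0 hs0) hx)).add (by simpa using (hasDerivAt_id x).const_mul c)
      · intro x hx
        have := hanti hs0 (le_trans hs0 hx) hx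
        simp only [Set.mem_Ici] at hx
        linarith
    set t := s0 + (h s0 / c + 1) with ht
    have hts : s0 ≤ t := by
      have : 0 ≤ h s0 / c := div_nonneg (hpos s0 hs0) hc0.le
      simp [ht]; linarith
    have hbt : h t + c * t ≤ h s0 + c * s0 := hφ (Set.self_mem_Ici) hts hts
    have hct : c * t = c * s0 + h s0 + c := by
      have hcc : c * (h s0 / c) = h s0 := by
        have hc' : c ≠ 0 := hc0.ne'
        field_simp
      rw [ht]; linear_combination hcc
    have hht : 0 ≤ h t := hpos t (le_trans hs0 hts)
    linarith
  -- h monotone on Ici a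
  have hmono : MonotoneOn h (Set.Ici a) :=
    monoOn_of_deriv_nonneg' (fun x hx => hode1 x (hSs x hx)) (fun x hx => hd_nonneg x hx)
  -- find s0 > a with h s0 > 0
  have hs0 : ∃ s0 : ℝ, a ≤ s0 ∧ 0 < h s0 := by
    by_contra hz
    push_neg at hz
    have hzero : ∀ s : ℝ, a ≤ s → h s = 0 := fun s hs =>
      le_antisymm (hz s hs) (hpos s hs)
    -- then h' = 0 at a+1 by local constancy
    have hev : h =ᶠ[nhds (a+1)] (fun _ => (0:ℝ)) := by
      filter_upwards [Ioi_mem_nhds (show a < a + 1 by linarith)] with x hx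
      exact hzero x (le_of_lt hx)
    have : HasDerivAt h 0 (a+1) := (hasDerivAt_const (a+1) (0:ℝ)).congr_of_eventuallyEq hev
    have hd0 : h' (a+1) = 0 := ((hode1 (a+1) (by linarith)).unique this)
    exact hnz (a+1) (by linarith) ⟨hzero (a+1) (by linarith), hd0⟩
  obtain ⟨s0, hs0a, hs0pos⟩ := hs0
  set c := h s0 with hcdef
  set d := (B - ε) * c with hddef
  have hd0 : 0 < d := mul_pos (by linarith) hs0pos
  have hlow : ∀ s : ℝ, s0 ≤ s → c ≤ h s := fun s hs =>
    hmono hs0a (le_trans hs0a hs) hs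
  -- ψ = h' + d • id antitone on Ici s0
  have hψ : AntitoneOn (fun s => h' s + d * s) (Set.Ici s0) := by
    apply antiOn_of_deriv_nonpos' (f' := fun s => -(B * h s + N s) + d)
    · intro x hx
      exact (hode2 x (hSs x (le_trans hs0a hx))).add (by simpa using (hasDerivAt_id x).const_mul d)
    · intro x hx
      simp only [Set.mem_Ici] at hx
      have h1 := (hNb x (le_trans hs0a hx)).1
      have h2 := hlow x hx
      have : d ≤ (B - ε) * h x := by
        rw [hddef]
        exact mul_le_mul_of_nonneg_left h2 (by linarith)
      nlinarith
  set t := s0 + (h' s0 / d + 1) with ht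
  have hts : s0 ≤ t := by
    have : 0 ≤ h' s0 / d := div_nonneg (hd_nonneg s0 hs0a) hd0.le
    simp [ht]; linarith
  have hψt : h' t + d * t ≤ h' s0 + d * s0 := hψ (Set.self_mem_Ici) hts hts
  have hdt : d * t = d * s0 + h' s0 + d := by
    have hdd : d * (h' s0 / d) = h' s0 := by
      have hd' : d ≠ 0 := hd0.ne'
      field_simp
    rw [ht]; linear_combination hdd
  have := hd_nonneg t (le_trans hs0a hts)
  linarith

/-- oscillation for the perturbed linear oscillator `h'' + B h + N = 0`
with `|N| ≤ ε |h|`, `0 < ε < B`: `h` changes sign infinitely often as `s → +∞`. -/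
theorem perturbed_oscillator_sign_changes
    (B ε S : ℝ) (hB : 0 < B) (hε0 : 0 < ε) (hεB : ε < B)
    (h h' N : ℝ → ℝ)
    (hNc : ContinuousOn N (Set.Ici S))
    (hode1 : ∀ s : ℝ, S ≤ s → HasDerivAt h (h' s) s)
    (hode2 : ∀ s : ℝ, S ≤ s → HasDerivAt h' (-(B * h s + N s)) s)
    (hN : ∀ s : ℝ, S ≤ s → |N s| ≤ ε * |h s|)
    (hnz : ∀ s : ℝ, S ≤ s → ¬(h s = 0 ∧ h' s = 0)) :
    ∀ T : ℝ, S ≤ T →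
      (∃ s₁ : ℝ, T < s₁ ∧ 0 < h s₁) ∧ (∃ s₂ : ℝ, T < s₂ ∧ h s₂ < 0) := by

  intro T hTS
  constructor
  · obtain ⟨s, hs, hneg⟩ := neg_somewhere B ε S hB hε0 hεB (fun s => -h s) (fun s => -h' s)
      (fun s => -N s)
      (fun s hs => (hode1 s hs).neg)
      (fun s hs => by
        have := (hode2 s hs).neg
        exact this.congr_deriv (by ring))
      (fun s hs => by simpa using hN s hs)
      (fun s hs hc => hnz s hs ⟨neg_eq_zero.mp hc.1, neg_eq_zero.mp hc.2⟩)
      T hTS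
    exact ⟨s, hs, by linarith⟩
  · exact neg_somewhere B ε S hB hε0 hεB h h' N hode1 hode2 hN hnz T hTS
end
end

section
/- Let A, B ∈ ℝ with B > 0 and A² < 4B, let ε ∈ (0, B - |A|·√B/2), and let S ∈ ℝ. Let h : [S,∞) → ℝ be C² and N : [S,∞) → ℝ continuous, with h''(s) - A·h'(s) + B·h(s) + N(s) = 0 for all s ≥ S, |N(s)| ≤ ε·|h(s)| for all s ≥ S, and (h(s), h'(s)) ≠ (0,0) for all s ≥ S. Then h changes sign infinitely often as s → +∞: for every T ≥ S there exist s₁, s₂ > T with h(s₁) > 0 and h(s₂) < 0. -/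
open Real Filter Set MeasureTheory

noncomputable section

section AuxOsc

lemma riccati_blowup (δ T : ℝ) (hδ : 0 < δ) (v v' : ℝ → ℝ)
    (hd : ∀ s : ℝ, T < s → HasDerivAt v (v' s) s)
    (hb : ∀ s : ℝ, T < s → v' s ≤ -(v s)^2 - δ) : False := by
  set t₀ := T + 1 with ht₀
  have hlt : ∀ s : ℝ, t₀ ≤ s → T < s := fun s hs => by
    simp only [ht₀] at hs; linarith
  have hcv : ContinuousOn v (Ici t₀) := fun s hs =>
    ((hd s (hlt s hs)).continuousAt).continuousWithinAt
  have hg : AntitoneOn (fun s => v s + δ * s) (Ici t₀) := by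
    apply antitoneOn_of_deriv_nonpos (convex_Ici t₀)
    · exact hcv.add (continuous_const.mul continuous_id).continuousOn
    · intro x hx
      rw [interior_Ici] at hx
      exact ((hd x (hlt x (le_of_lt hx))).add
        ((hasDerivAt_id x).const_mul δ)).differentiableAt.differentiableWithinAt
    · intro x hx
      rw [interior_Ici] at hx
      have hD : HasDerivAt (fun s => v s + δ * s) (v' x + δ) x := by
        exact ((hd x (hlt x (le_of_lt hx))).add ((hasDerivAt_id x).const_mul δ)).congr_deriv (by ring)
      rw [hD.deriv]
      nlinarith [hb x (hlt x (le_of_lt hx)), sq_nonneg (v x)]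
  set t₁ := t₀ + (|v t₀| + 1)/δ with ht₁
  have hpos : 0 < (|v t₀| + 1)/δ := by positivity
  have ht₁0 : t₀ ≤ t₁ := by rw [ht₁]; linarith
  have hvt₁ : v t₁ ≤ -1 := by
    have hmono := hg self_mem_Ici (show t₁ ∈ Ici t₀ from ht₁0) ht₁0
    have e : δ * ((|v t₀| + 1)/δ) = |v t₀| + 1 := mul_div_cancel₀ _ (ne_of_gt hδ)
    simp only [ht₁] at hmono
    nlinarith [le_abs_self (v t₀)]
  have hvneg : ∀ s : ℝ, t₁ ≤ s → v s ≤ -1 := by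
    intro s hs
    have hmono := hg (show t₁ ∈ Ici t₀ from ht₁0) (show s ∈ Ici t₀ from le_trans ht₁0 hs) hs
    simp only at hmono
    nlinarith [mul_nonneg hδ.le (sub_nonneg.mpr hs)]
  have hvne : ∀ s : ℝ, t₁ ≤ s → v s ≠ 0 := fun s hs =>
    ne_of_lt (by linarith [hvneg s hs])
  have hu' : ∀ s : ℝ, t₁ ≤ s → HasDerivAt (fun t => 1 / v t - t)
      ((0 * v s - 1 * v' s)/(v s)^2 - 1) s := by
    intro s hs
    exact ((hasDerivAt_const s (1:ℝ)).div (hd s (hlt s (le_trans ht₁0 hs)))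
      (hvne s hs)).sub (hasDerivAt_id' s)
  have hum : MonotoneOn (fun t => 1 / v t - t) (Ici t₁) := by
    apply monotoneOn_of_deriv_nonneg (convex_Ici t₁)
    · exact ((continuousOn_const.div (hcv.mono (Ici_subset_Ici.mpr ht₁0))
        (fun s hs => hvne s hs)).sub continuous_id.continuousOn)
    · intro x hx
      rw [interior_Ici] at hx
      exact (hu' x hx.le).differentiableAt.differentiableWithinAt
    · intro x hx
      rw [interior_Ici] at hx
      rw [(hu' x hx.le).deriv]
      have hv1 : v x ≤ -1 := hvneg x hx.le
      have hvp : 0 < (v x)^2 := pow_two_pos_of_ne_zero (ne_of_lt (by linarith : v x < 0))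
      have h1 : (1:ℝ) ≤ (0 * v x - 1 * v' x) / (v x)^2 := by
        rw [le_div_iff₀ hvp]
        nlinarith [hb x (hlt x (le_trans ht₁0 hx.le))]
      linarith
  have hkey := hum (self_mem_Ici) (mem_Ici.mpr (show t₁ ≤ t₁ + 2 by linarith)) (show t₁ ≤ t₁ + 2 by linarith)
  simp only at hkey
  have h1 : 1 / v t₁ * v t₁ = 1 := one_div_mul_cancel (hvne t₁ le_rfl)
  have h1' : -1 ≤ 1 / v t₁ := by nlinarith
  have h2 : 1 / v (t₁ + 2) < 0 := by
    apply one_div_neg.mpr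
    linarith [hvneg (t₁ + 2) (by linarith)]
  linarith

lemma sign_both_near (h : ℝ → ℝ) (d z η : ℝ) (hd : HasDerivAt h d z)
    (hz : h z = 0) (hd0 : d ≠ 0) (hη : 0 < η) :
    ∃ p q : ℝ, |p - z| < η ∧ |q - z| < η ∧ 0 < h p ∧ h q < 0 := by
  have hslope := hasDerivAt_iff_tendsto_slope.mp hd
  have key : ∀ᶠ y in nhdsWithin z {z}ᶜ, slope h z y ≠ 0 ∧
      (0 < d → 0 < slope h z y) ∧ (d < 0 → slope h z y < 0) := by
    rcases hd0.lt_or_gt with hneg | hpos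
    · filter_upwards [hslope.eventually (eventually_lt_nhds hneg)] with y hy
      exact ⟨ne_of_lt hy, fun hc => absurd hneg (by linarith), fun _ => hy⟩
    · filter_upwards [hslope.eventually (eventually_gt_nhds hpos)] with y hy
      exact ⟨ne_of_gt hy, fun _ => hy, fun hc => absurd hpos (by linarith)⟩
  rw [eventually_nhdsWithin_iff] at key
  rcases Metric.eventually_nhds_iff.mp key with ⟨ε, hε, hball⟩
  set r := min (ε/2) (η/2) with hr
  have hr0 : 0 < r := by positivity
  have hrε : r < ε := lt_of_le_of_lt (min_le_left _ _) (by linarith)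
  have hrη : r < η := lt_of_le_of_lt (min_le_right _ _) (by linarith)
  have hslp : ∀ y : ℝ, y ≠ z → dist y z < ε → slope h z y = h y / (y - z) := by
    intro y hy hdy
    rw [slope_def_field, hz, sub_zero]
  have hp := hball (show dist (z + r) z < ε by rw [Real.dist_eq]; simp [abs_of_pos hr0, hrε])
    (show z + r ∈ ({z}ᶜ : Set ℝ) by simp; intro hc; linarith)
  have hq := hball (show dist (z - r) z < ε by
      rw [Real.dist_eq]; rw [show z - r - z = -r by ring, abs_neg, abs_of_pos hr0]; exact hrε)
    (show z - r ∈ ({z}ᶜ : Set ℝ) by simp; intro hc; linarith)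
  rw [hslp _ (by intro hc; simp at hc; linarith) (by rw [Real.dist_eq]; simp [abs_of_pos hr0, hrε])] at hp
  rw [hslp _ (by intro hc; linarith [hr0]; ) (by
      rw [Real.dist_eq, show z - r - z = -r by ring, abs_neg, abs_of_pos hr0]; exact hrε)] at hq
  have hpz : z + r - z = r := by ring
  have hqz : z - r - z = -r := by ring
  rw [hpz] at hp
  rw [hqz] at hq
  rcases hd0.lt_or_gt with hneg | hpos
  · -- d < 0 : h(z+r)/r < 0 so h(z+r) < 0 ; h(z-r)/(-r) < 0 so h(z-r) > 0
    have h1 : h (z + r) < 0 := by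
      have := hp.2.2 hneg
      rcases div_neg_iff.mp this with ⟨_, hc⟩ | ⟨ha, _⟩
      · linarith
      · exact ha
    have h2 : 0 < h (z - r) := by
      have := hq.2.2 hneg
      rcases div_neg_iff.mp this with ⟨_, hc⟩ | ⟨hpos2, _⟩
      · linarith
      · linarith
    exact ⟨z - r, z + r, by rw [hqz, abs_neg, abs_of_pos hr0]; exact hrη,
      by rw [hpz, abs_of_pos hr0]; exact hrη, h2, h1⟩
  · have h1 : 0 < h (z + r) := by
      have := hp.2.1 hpos
      rcases div_pos_iff.mp this with ⟨ha, _⟩ | ⟨_, hc⟩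
      · exact ha
      · linarith
    have h2 : h (z - r) < 0 := by
      have := hq.2.1 hpos
      rcases div_pos_iff.mp this with ⟨_, hc⟩ | ⟨ha, _⟩
      · linarith
      · exact ha
    exact ⟨z + r, z - r, by rw [hpz, abs_of_pos hr0]; exact hrη,
      by rw [hqz, abs_neg, abs_of_pos hr0]; exact hrη, h1, h2⟩

end AuxOsc

/-- oscillation for the damped perturbed oscillator
`h'' - A h' + B h + N = 0` with `A² < 4B`, `|N| ≤ ε |h|`, `0 < ε < B - |A|√B/2`. -/
theorem damped_perturbed_oscillator_sign_changes
    (A B ε S : ℝ) (hB : 0 < B) (hAB : A ^ 2 < 4 * B)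
    (hε0 : 0 < ε) (hεB : ε < B - |A| * Real.sqrt B / 2)
    (h h' N : ℝ → ℝ)
    (hNc : ContinuousOn N (Set.Ici S))
    (hode1 : ∀ s : ℝ, S ≤ s → HasDerivAt h (h' s) s)
    (hode2 : ∀ s : ℝ, S ≤ s → HasDerivAt h' (A * h' s - B * h s - N s) s)
    (hN : ∀ s : ℝ, S ≤ s → |N s| ≤ ε * |h s|)
    (hnz : ∀ s : ℝ, S ≤ s → ¬(h s = 0 ∧ h' s = 0)) :
    ∀ T : ℝ, S ≤ T →
      (∃ s₁ : ℝ, T < s₁ ∧ 0 < h s₁) ∧ (∃ s₂ : ℝ, T < s₂ ∧ h s₂ < 0) := by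
  have hA2 : |A|/2 < Real.sqrt B := by
    rw [show |A|/2 = Real.sqrt ((|A|/2)^2) from (Real.sqrt_sq (by positivity)).symm]
    apply Real.sqrt_lt_sqrt (by positivity)
    rw [div_pow, sq_abs]
    linarith
  have hδpos : 0 < B - ε - A^2/4 := by
    nlinarith [abs_nonneg A, mul_le_mul_of_nonneg_left hA2.le (abs_nonneg A), sq_abs A]
  have hzero : ∀ T' : ℝ, S ≤ T' → ∃ z, T' < z ∧ h z = 0 := by
    intro T' hT'
    by_contra hc
    push_neg at hc
    apply riccati_blowup (B - ε - A^2/4) T' hδpos (fun s => h' s / h s - A/2)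
      (fun s => ((A * h' s - B * h s - N s) * h s - h' s * h' s)/(h s)^2)
    · intro s hs
      have hS : S ≤ s := le_trans hT' hs.le
      exact ((hode2 s hS).div (hode1 s hS) (hc s hs)).sub_const (A/2)
    · intro s hs
      have hS : S ≤ s := le_trans hT' hs.le
      have hne := hc s hs
      have hh2 : 0 < (h s)^2 := pow_two_pos_of_ne_zero hne
      have habs : |N s * h s| ≤ ε * (h s)^2 := by
        rw [abs_mul]
        calc |N s| * |h s| ≤ (ε * |h s|) * |h s| :=
              mul_le_mul_of_nonneg_right (hN s hS) (abs_nonneg _)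
          _ = ε * (h s)^2 := by rw [← sq_abs]; ring
      have hN1 : -(ε * (h s)^2) ≤ N s * h s := by
        have := neg_abs_le (N s * h s); linarith
      rw [div_le_iff₀ hh2]
      have key : (-(h' s / h s - A/2)^2 - (B - ε - A^2/4)) * (h s)^2
          = -(h' s - A/2 * h s)^2 - (B - ε - A^2/4) * (h s)^2 := by
        field_simp
      rw [key]
      nlinarith [sq_nonneg (h' s - A/2 * h s)]
  intro T hT
  obtain ⟨z, hz1, hz0⟩ := hzero (T + 1) (by linarith)
  have hSz : S ≤ z := by linarith
  have hd0 : h' z ≠ 0 := fun hcontra => hnz z hSz ⟨hz0, hcontra⟩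
  obtain ⟨p, q, hp1, hq1, hp2, hq2⟩ :=
    sign_both_near h (h' z) z (z - T) (hode1 z hSz) hz0 hd0 (by linarith)
  have hp1' := (abs_lt.mp hp1).1
  have hq1' := (abs_lt.mp hq1).1
  exact ⟨⟨p, by linarith, hp2⟩, ⟨q, by linarith, hq2⟩⟩
end
end

section
/- Let n > 2 be an integer and l > 2_* (so 0 < m(l) < n-2). Let g : (0,∞) × ℝ → [0,∞) be continuous, C¹ in its first variable, and Lipschitz in its first variable on every compact subset of (0,∞) × ℝ. Suppose there are P₁ > 0 and B > 0 such that A(l)² < 4B and, for every ε > 0, there exist δ > 0 and S ∈ ℝ with |(∂g/∂y₁)(y, s) - (B + C(l))| < ε whenever |y - P₁| < δ and s > S. Let ȳ = (ȳ₁, ȳ₂) and ỹ = (ỹ₁, ỹ₂) be two distinct solutions, on some interval [S₀, ∞), of the system ẏ₁ = m(l)·y₁ + y₂, ẏ₂ = -(n - 2 - m(l))·y₂ - g(y₁, s), both converging to the point (P₁, -m(l)·P₁) as s → +∞. Then ȳ₁ - ỹ₁ changes sign infinitely often as s → +∞: for every T ≥ S₀ there exist s₁, s₂ > T with ȳ₁(s₁)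 > ỹ₁(s₁) and ȳ₁(s₂) < ỹ₁(s₂). (Consequently, the two corresponding slow-decay solutions Ū(r) = ȳ₁(ln r)·r^{-m(l)} and Ũ(r) = ỹ₁(ln r)·r^{-m(l)} of the radial stationary equation satisfy: Ū - Ũ changes sign infinitely many times as r → +∞.) -/
open Real Filter Set MeasureTheory

noncomputable section

set_option maxHeartbeats 1000000 in
private lemma cross_aux (m k : ℝ)
    (g gy : ℝ → ℝ → ℝ)
    (hgy : ∀ s y : ℝ, 0 < y → HasDerivAt (fun z => g z s) (gy y s) y)
    (hlip : ∀ K : Set (ℝ × ℝ), IsCompact K → K ⊆ Set.Ioi 0 ×ˢ Set.univ →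
      ∃ L : ℝ, ∀ p ∈ K, ∀ q ∈ K, p.2 = q.2 →
        |g p.1 p.2 - g q.1 q.2| ≤ L * |p.1 - q.1|)
    (P₁ B : ℝ) (hB : 0 < B) (hfoc : (k - 2*m)^2 < 4*B)
    (hconv : ∀ ε : ℝ, 0 < ε → ∃ δ : ℝ, 0 < δ ∧ ∃ S : ℝ, ∀ y s : ℝ,
      |y - P₁| < δ → S < s → |gy y s - (B + m*(k-m))| < ε)
    (S₀ : ℝ) (yb1 yb2 yt1 yt2 : ℝ → ℝ)
    (hposb : ∀ s, S₀ ≤ s → 0 < yb1 s)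
    (hpost : ∀ s, S₀ ≤ s → 0 < yt1 s)
    (hsysb : ∀ s, S₀ ≤ s → HasDerivAt yb1 (m * yb1 s + yb2 s) s ∧
        HasDerivAt yb2 (-((k - m) * yb2 s) - g (yb1 s) s) s)
    (hsyst : ∀ s, S₀ ≤ s → HasDerivAt yt1 (m * yt1 s + yt2 s) s ∧
        HasDerivAt yt2 (-((k - m) * yt2 s) - g (yt1 s) s) s)
    (hdist : ∃ s, S₀ ≤ s ∧ (yb1 s, yb2 s) ≠ (yt1 s, yt2 s))
    (hlim1b : Tendsto yb1 atTop (nhds P₁))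
    (hlim1t : Tendsto yt1 atTop (nhds P₁))
    (T : ℝ) (hT : S₀ ≤ T) :
    ∃ s₁ : ℝ, T < s₁ ∧ yt1 s₁ < yb1 s₁ := by
  by_contra hcon
  push_neg at hcon
  -- hcon : ∀ s₁, T < s₁ → yb1 s₁ ≤ yt1 s₁
  obtain ⟨sd, hsd0, hne⟩ := hdist
  set z₁ : ℝ → ℝ := fun s => yb1 s - yt1 s with hz₁def
  set z₂ : ℝ → ℝ := fun s => yb2 s - yt2 s with hz₂def
  have hz₁d : ∀ s, S₀ ≤ s → HasDerivAt z₁ (m * z₁ s + z₂ s) s := by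
    intro s hs
    have h := (hsysb s hs).1.sub (hsyst s hs).1
    refine HasDerivAt.congr_deriv h ?_
    simp only [hz₁def, hz₂def]; ring
  have hz₂d : ∀ s, S₀ ≤ s →
      HasDerivAt z₂ (-((k - m) * z₂ s) - (g (yb1 s) s - g (yt1 s) s)) s := by
    intro s hs
    have h := (hsysb s hs).2.sub (hsyst s hs).2
    refine HasDerivAt.congr_deriv h ?_
    simp only [hz₁def, hz₂def]; ring
  -- Step A: the difference never vanishes after sd
  have hφpos : ∀ b, sd ≤ b → 0 < z₁ b ^ 2 + z₂ b ^ 2 := by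
    intro b hb
    have hbase : 0 < z₁ sd ^ 2 + z₂ sd ^ 2 := by
      have hor : z₁ sd ≠ 0 ∨ z₂ sd ≠ 0 := by
        by_contra h
        push_neg at h
        apply hne
        have h1 : yb1 sd = yt1 sd := by have := h.1; simp only [hz₁def] at this; linarith [sub_eq_zero.mp this]
        have h2 : yb2 sd = yt2 sd := by have := h.2; simp only [hz₂def] at this; linarith [sub_eq_zero.mp this]
        simp [h1, h2]
      rcases hor with h | h
      · have := pow_pos (abs_pos.mpr h) 2
        nlinarith [sq_abs (z₁ sd), sq_nonneg (z₂ sd)]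
      · have := pow_pos (abs_pos.mpr h) 2
        nlinarith [sq_abs (z₂ sd), sq_nonneg (z₁ sd)]
    -- continuity on [sd, b]
    have hcb : ContinuousOn yb1 (Icc sd b) := fun s hs =>
      ((hsysb s (hsd0.trans hs.1)).1.continuousAt.continuousWithinAt)
    have hct : ContinuousOn yt1 (Icc sd b) := fun s hs =>
      ((hsyst s (hsd0.trans hs.1)).1.continuousAt.continuousWithinAt)
    have hnei : (Icc sd b).Nonempty := ⟨sd, le_refl _, hb⟩
    obtain ⟨a₁, ha₁, hmin1⟩ := isCompact_Icc.exists_isMinOn hnei hcb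
    obtain ⟨a₂, ha₂, hmin2⟩ := isCompact_Icc.exists_isMinOn hnei hct
    obtain ⟨b₁, hb₁, hmax1⟩ := isCompact_Icc.exists_isMaxOn hnei hcb
    obtain ⟨b₂, hb₂, hmax2⟩ := isCompact_Icc.exists_isMaxOn hnei hct
    set c : ℝ := min (yb1 a₁) (yt1 a₂) with hc
    set d : ℝ := max (yb1 b₁) (yt1 b₂) with hd
    have hcpos : 0 < c := lt_min (hposb a₁ (hsd0.trans ha₁.1)) (hpost a₂ (hsd0.trans ha₂.1))
    obtain ⟨L, hL⟩ := hlip (Icc c d ×ˢ Icc sd b)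
      (isCompact_Icc.prod isCompact_Icc)
      (by
        intro p hp
        exact ⟨lt_of_lt_of_le hcpos hp.1.1, trivial⟩)
    set Lc : ℝ := |L| + 1 with hLc
    have hLcpos : 0 < Lc := by positivity
    have hmemb : ∀ s ∈ Icc sd b, (yb1 s, s) ∈ Icc c d ×ˢ Icc sd b := by
      intro s hs
      exact ⟨⟨(min_le_left _ _).trans (hmin1 hs), (hmax1 hs).trans (le_max_left _ _)⟩, hs⟩
    have hmemt : ∀ s ∈ Icc sd b, (yt1 s, s) ∈ Icc c d ×ˢ Icc sd b := by
      intro s hs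
      exact ⟨⟨(min_le_right _ _).trans (hmin2 hs), (hmax2 hs).trans (le_max_right _ _)⟩, hs⟩
    have hΔ : ∀ s ∈ Icc sd b, |g (yb1 s) s - g (yt1 s) s| ≤ Lc * |z₁ s| := by
      intro s hs
      have := hL _ (hmemb s hs) _ (hmemt s hs) rfl
      have h2 : L * |z₁ s| ≤ Lc * |z₁ s| := by
        apply mul_le_mul_of_nonneg_right _ (abs_nonneg _)
        calc L ≤ |L| := le_abs_self L
        _ ≤ Lc := by simp [hLc]
      exact this.trans h2
    set C : ℝ := 2*|m| + 1 + 2*|k-m| + Lc with hC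
    set ψ : ℝ → ℝ := fun s => (z₁ s ^ 2 + z₂ s ^ 2) * Real.exp (C * s) with hψ
    have hψd : ∀ s, S₀ ≤ s → HasDerivAt ψ
        (((2 * z₁ s * (m * z₁ s + z₂ s)
          + 2 * z₂ s * (-((k - m) * z₂ s) - (g (yb1 s) s - g (yt1 s) s)))
          + (z₁ s ^ 2 + z₂ s ^ 2) * C) * Real.exp (C * s)) s := by
      intro s hs
      have h1 : HasDerivAt (fun t => z₁ t ^ 2 + z₂ t ^ 2)
          (2 * z₁ s * (m * z₁ s + z₂ s)
            + 2 * z₂ s * (-((k - m) * z₂ s) - (g (yb1 s) s - g (yt1 s) s))) s := by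
        have ha := (hz₁d s hs).pow 2
        have hb2 := (hz₂d s hs).pow 2
        have := ha.add hb2
        refine HasDerivAt.congr_deriv this ?_; ring
      have h0 : HasDerivAt (fun t : ℝ => C * t) C s := by
        simpa using (hasDerivAt_id s).const_mul C
      have h2 : HasDerivAt (fun t => Real.exp (C * t)) (Real.exp (C * s) * C) s := h0.exp
      have := h1.mul h2
      refine HasDerivAt.congr_deriv this ?_; ring
    have hmono : MonotoneOn ψ (Icc sd b) := by
      apply monotoneOn_of_deriv_nonneg (convex_Icc sd b)
      · exact fun s hs => (hψd s (hsd0.trans hs.1)).continuousAt.continuousWithinAt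
      · intro s hs
        rw [interior_Icc] at hs
        exact (hψd s (hsd0.trans hs.1.le)).differentiableAt.differentiableWithinAt
      · intro s hs
        rw [interior_Icc] at hs
        have hs' : s ∈ Icc sd b := Ioo_subset_Icc_self hs
        rw [(hψd s (hsd0.trans hs.1.le)).deriv]
        have hΔs := hΔ s hs'
        have hbound : 2 * |z₁ s| * |z₂ s| ≤ z₁ s ^ 2 + z₂ s ^ 2 := by
          nlinarith [sq_nonneg (|z₁ s| - |z₂ s|), sq_abs (z₁ s), sq_abs (z₂ s)]
        have he : (0:ℝ) < Real.exp (C * s) := Real.exp_pos _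
        apply mul_nonneg _ he.le
        have h1 : 2 * z₂ s * (g (yb1 s) s - g (yt1 s) s) ≤ 2 * |z₂ s| * (Lc * |z₁ s|) := by
          calc 2 * z₂ s * (g (yb1 s) s - g (yt1 s) s)
              ≤ |2 * z₂ s * (g (yb1 s) s - g (yt1 s) s)| := le_abs_self _
            _ = 2 * |z₂ s| * |g (yb1 s) s - g (yt1 s) s| := by
                rw [abs_mul, abs_mul]; simp [abs_of_nonneg]
            _ ≤ 2 * |z₂ s| * (Lc * |z₁ s|) := by
                apply mul_le_mul_of_nonneg_left hΔs (by positivity)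
        have h1' : 2 * z₂ s * (g (yb1 s) s - g (yt1 s) s) ≤ Lc * (z₁ s ^ 2 + z₂ s ^ 2) :=
          calc 2 * z₂ s * (g (yb1 s) s - g (yt1 s) s) ≤ 2 * |z₂ s| * (Lc * |z₁ s|) := h1
            _ = Lc * (2 * |z₁ s| * |z₂ s|) := by ring
            _ ≤ Lc * (z₁ s ^ 2 + z₂ s ^ 2) := mul_le_mul_of_nonneg_left hbound hLcpos.le
        have hm1 : -|m| * z₁ s ^ 2 ≤ m * z₁ s ^ 2 :=
          mul_le_mul_of_nonneg_right (neg_abs_le m) (sq_nonneg _)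
        have hk1 : (k - m) * z₂ s ^ 2 ≤ |k - m| * z₂ s ^ 2 :=
          mul_le_mul_of_nonneg_right (le_abs_self (k - m)) (sq_nonneg _)
        have h2z : -(z₁ s ^ 2 + z₂ s ^ 2) ≤ 2 * z₁ s * z₂ s := by
          nlinarith [sq_nonneg (z₁ s + z₂ s)]
        rw [hC]
        linarith [hm1, hk1, h2z, h1', hLcpos,
          mul_nonneg (abs_nonneg (k - m)) (sq_nonneg (z₁ s)),
          mul_nonneg (abs_nonneg m) (sq_nonneg (z₂ s))]
    have hmle : ψ sd ≤ ψ b := hmono (left_mem_Icc.mpr hb) (right_mem_Icc.mpr hb) hb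
    have hψsd : 0 < ψ sd := mul_pos hbase (Real.exp_pos _)
    have hψb : 0 < ψ b := lt_of_lt_of_le hψsd hmle
    by_contra hle
    push_neg at hle
    simp only [hψ] at hψb
    nlinarith [Real.exp_pos (C * b), hψb, hle]
  -- Step B: z₁ is strictly negative after T'
  set T' : ℝ := max T sd with hT'
  have hT'0 : S₀ ≤ T' := le_trans hT (le_max_left _ _)
  have hz₁neg : ∀ s, T' < s → z₁ s < 0 := by
    intro s hs
    have hs0 : S₀ ≤ s := hT'0.trans hs.le
    have hle : z₁ s ≤ 0 := sub_nonpos.mpr (hcon s (lt_of_le_of_lt (le_max_left T sd) hs))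
    rcases lt_or_eq_of_le hle with h | h
    · exact h
    exfalso
    have hmax : IsLocalMax z₁ s := by
      have hmem : Ioi T' ∈ nhds s := Ioi_mem_nhds hs
      filter_upwards [hmem] with t ht
      rw [h]
      exact sub_nonpos.mpr (hcon t (lt_of_le_of_lt (le_max_left T sd) ht))
    have hzder := hmax.hasDerivAt_eq_zero (hz₁d s hs0)
    have hz₂0 : z₂ s = 0 := by rw [h] at hzder; simpa using hzder
    have hpos := hφpos s ((le_max_right T sd).trans hs.le)
    rw [h, hz₂0] at hpos
    simp at hpos
  -- Step C: quantitative bound on the difference quotient q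
  set η : ℝ := (4*B - (k - 2*m)^2)/8 with hηdef
  have hηpos : 0 < η := by rw [hηdef]; linarith
  obtain ⟨δ, hδ, S, hS⟩ := hconv η hηpos
  have hev1 : ∀ᶠ s in atTop, |yb1 s - P₁| < δ := by
    have := hlim1b (Metric.ball_mem_nhds P₁ hδ)
    simpa [Metric.mem_ball, Real.dist_eq] using this
  have hev2 : ∀ᶠ s in atTop, |yt1 s - P₁| < δ := by
    have := hlim1t (Metric.ball_mem_nhds P₁ hδ)
    simpa [Metric.mem_ball, Real.dist_eq] using this
  obtain ⟨S₁, hS₁⟩ := eventually_atTop.mp ((hev1.and hev2).and (eventually_gt_atTop (max T' S)))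
  set SS : ℝ := max S₁ (T' + 1) with hSSdef
  have hSS' : T' < SS := lt_of_lt_of_le (lt_add_one T') (le_max_right _ _)
  have hSSprop : ∀ s, SS ≤ s → (|yb1 s - P₁| < δ ∧ |yt1 s - P₁| < δ) ∧ max T' S < s := by
    intro s hs
    exact hS₁ s (le_trans (le_max_left _ _) hs)
  set q : ℝ → ℝ := fun s => (g (yb1 s) s - g (yt1 s) s) / z₁ s with hqdef
  have hqz : ∀ s, T' < s → q s * z₁ s = g (yb1 s) s - g (yt1 s) s := fun s hs =>
    div_mul_cancel₀ _ (hz₁neg s hs).ne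
  have hq : ∀ s, SS ≤ s → k^2/4 + η < q s := by
    intro s hs
    obtain ⟨⟨hb1, hb2⟩, hgt⟩ := hSSprop s hs
    have hT's : T' < s := lt_of_le_of_lt (le_max_left _ _) hgt
    have hs0 : S₀ ≤ s := hT'0.trans hT's.le
    have hz₁s := hz₁neg s hT's
    have hab : yb1 s < yt1 s := by
      simp only [hz₁def] at hz₁s; linarith
    have hbpos := hposb s hs0
    have hIccpos : ∀ y ∈ Icc (yb1 s) (yt1 s), 0 < y := fun y hy => lt_of_lt_of_le hbpos hy.1
    obtain ⟨ξ, hξ, hslope⟩ := exists_hasDerivAt_eq_slope (fun y => g y s) (fun y => gy y s) hab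
      (fun y hy => ((hgy s y (hIccpos y hy)).continuousAt.continuousWithinAt))
      (fun y hy => hgy s y (hIccpos y (Ioo_subset_Icc_self hy)))
    have hξδ : |ξ - P₁| < δ := by
      rw [abs_lt] at hb1 hb2 ⊢
      exact ⟨by linarith [hξ.1], by linarith [hξ.2]⟩
    have hgyξ := hS ξ s hξδ (lt_of_le_of_lt (le_max_right T' S) hgt)
    have hne1 : yb1 s - yt1 s ≠ 0 := by intro h0; simp only [hz₁def] at hz₁s; linarith
    have hne2 : yt1 s - yb1 s ≠ 0 := by intro h0; apply hne1; linarith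
    have hqeq : q s = gy ξ s := by
      rw [hslope]
      show (g (yb1 s) s - g (yt1 s) s) / (yb1 s - yt1 s) = _
      rw [div_eq_div_iff hne1 hne2]
      ring
    have hid : (k - 2*m)^2 + 4*(m*(k-m)) = k^2 := by ring
    have habs := abs_lt.mp hgyξ
    rw [hqeq]
    rw [hηdef] at habs ⊢
    linarith [habs.1]
  -- Step D: the Riccati variable w = z₂ / z₁
  set w : ℝ → ℝ := fun s => z₂ s / z₁ s with hwdef
  have hwd : ∀ s, T' < s → HasDerivAt w (-(q s) - k * w s - w s ^ 2) s := by
    intro s hs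
    have hs0 : S₀ ≤ s := hT'0.trans hs.le
    have hzne : z₁ s ≠ 0 := (hz₁neg s hs).ne
    have h := (hz₂d s hs0).div (hz₁d s hs0) hzne
    refine HasDerivAt.congr_deriv h ?_
    rw [show g (yb1 s) s - g (yt1 s) s = q s * z₁ s from (hqz s hs).symm]
    simp only [hwdef]
    field_simp
    ring
  have hwval : ∀ s, SS ≤ s → -(q s) - k * w s - w s ^ 2 ≤ -((w s + k/2)^2) - η := by
    intro s hs
    have h := hq s hs
    have hr : -(q s) - k * w s - w s ^ 2 - (-((w s + k/2)^2) - η) = k^2/4 + η - q s := by ring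
    linarith
  -- Step F: w decreases at definite rate
  have hFd : ∀ s, T' < s → HasDerivAt (fun t => w t + η * t) ((-(q s) - k * w s - w s ^ 2) + η) s := by
    intro s hs
    exact (hwd s hs).add (by simpa using (hasDerivAt_id s).const_mul η)
  have hwmono : AntitoneOn (fun t => w t + η * t) (Ici SS) := by
    apply antitoneOn_of_deriv_nonpos (convex_Ici SS)
    · exact fun s hs => (hFd s (lt_of_lt_of_le hSS' hs)).continuousAt.continuousWithinAt
    · intro s hs
      rw [interior_Ici] at hs
      exact (hFd s (hSS'.trans hs)).differentiableAt.differentiableWithinAt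
    · intro s hs
      rw [interior_Ici] at hs
      rw [(hFd s (hSS'.trans hs)).deriv]
      have := hwval s hs.le
      nlinarith [sq_nonneg (w s + k/2)]
  set E : ℝ := max ((w SS + k/2 + 1)/η) 1 with hEdef
  have hE1 : (1:ℝ) ≤ E := le_max_right _ _
  set S₂ : ℝ := SS + E with hS₂def
  have hSS₂ : SS ≤ S₂ := by rw [hS₂def]; linarith
  have hw2 : w S₂ + η * S₂ ≤ w SS + η * SS :=
    hwmono (mem_Ici.mpr le_rfl) (mem_Ici.mpr hSS₂) hSS₂
  have hηE : w SS + k/2 + 1 ≤ η * E := by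
    have h1 : (w SS + k/2 + 1)/η ≤ E := le_max_left _ _
    calc w SS + k/2 + 1 = η * ((w SS + k/2 + 1)/η) := by field_simp
      _ ≤ η * E := mul_le_mul_of_nonneg_left h1 hηpos.le
  have hwS₂ : w S₂ ≤ -(k/2) - 1 := by
    have hsplit : η * S₂ = η * SS + η * E := by rw [hS₂def]; ring
    linarith
  -- Step G: Riccati blow-up gives the contradiction
  set v : ℝ → ℝ := fun s => -(w s + k/2) with hvdef
  have hvsq : ∀ s, v s ^ 2 = (w s + k/2)^2 := by intro s; rw [hvdef]; ring
  have hvd : ∀ s, SS ≤ s → HasDerivAt v (q s + k * w s + w s ^ 2) s := by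
    intro s hs
    have h := ((hwd s (hSS'.trans_le hs)).add_const (k/2)).neg
    refine HasDerivAt.congr_deriv h ?_
    ring
  have hvlb : ∀ s, SS ≤ s → v s ^ 2 + η ≤ q s + k * w s + w s ^ 2 := by
    intro s hs
    have h := hwval s hs
    rw [hvsq s]
    linarith
  have hvmono : MonotoneOn v (Ici S₂) := by
    apply monotoneOn_of_deriv_nonneg (convex_Ici S₂)
    · exact fun s hs => (hvd s (hSS₂.trans hs)).continuousAt.continuousWithinAt
    · intro s hs
      rw [interior_Ici] at hs
      exact (hvd s (hSS₂.trans hs.le)).differentiableAt.differentiableWithinAt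
    · intro s hs
      rw [interior_Ici] at hs
      rw [(hvd s (hSS₂.trans hs.le)).deriv]
      have := hvlb s (hSS₂.trans hs.le)
      nlinarith [sq_nonneg (v s)]
  have hv1 : ∀ s, S₂ ≤ s → 1 ≤ v s := by
    intro s hs
    have h0 : 1 ≤ v S₂ := by rw [hvdef]; simp only []; linarith
    exact h0.trans (hvmono (mem_Ici.mpr le_rfl) (mem_Ici.mpr hs) hs)
  have hvne : ∀ s, S₂ ≤ s → v s ≠ 0 := fun s hs => by
    have := hv1 s hs; intro h0; rw [h0] at this; linarith
  have hud : ∀ s, S₂ ≤ s →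
      HasDerivAt (fun t => -(v t)⁻¹ - t) ((q s + k * w s + w s ^ 2)/(v s)^2 - 1) s := by
    intro s hs
    have h1 := ((hvd s (hSS₂.trans hs)).inv (hvne s hs)).neg
    have h2 := h1.sub (hasDerivAt_id s)
    refine HasDerivAt.congr_deriv h2 ?_
    field_simp
  have humono : MonotoneOn (fun t => -(v t)⁻¹ - t) (Ici S₂) := by
    apply monotoneOn_of_deriv_nonneg (convex_Ici S₂)
    · exact fun s hs => (hud s hs).continuousAt.continuousWithinAt
    · intro s hs
      rw [interior_Ici] at hs
      exact (hud s hs.le).differentiableAt.differentiableWithinAt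
    · intro s hs
      rw [interior_Ici] at hs
      rw [(hud s hs.le).deriv]
      have hvs := hv1 s hs.le
      have hv2 : (0:ℝ) < v s ^ 2 := by nlinarith
      have hlb := hvlb s (hSS₂.trans hs.le)
      rw [sub_nonneg, le_div_iff₀ hv2]
      linarith
  have hfin : -(v S₂)⁻¹ - S₂ ≤ -(v (S₂ + 2))⁻¹ - (S₂ + 2) :=
    humono (mem_Ici.mpr le_rfl) (mem_Ici.mpr (by linarith)) (by linarith)
  have ha := hv1 S₂ le_rfl
  have hb2 := hv1 (S₂ + 2) (by linarith)
  have hia : (v S₂)⁻¹ ≤ 1 := by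
    rw [← one_div]
    exact (div_le_one (by linarith)).mpr ha
  have hib : (0:ℝ) < (v (S₂ + 2))⁻¹ := inv_pos.mpr (by linarith)
  linarith

/-- two distinct trajectories of the Fowler system converging to the same
focus-type critical point `(P₁, -m(l)P₁)` cross each other infinitely many times. -/
theorem trajectories_to_focus_cross_infinitely_often
    (n : ℕ) (hn : 2 < n) (l : ℝ) (hl : Paper.twoLow n < l)
    (g gy : ℝ → ℝ → ℝ)
    (hgc : ContinuousOn (fun p : ℝ × ℝ => g p.1 p.2) (Set.Ioi 0 ×ˢ Set.univ))
    (hgnn : ∀ y s : ℝ, 0 < y → 0 ≤ g y s)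
    (hgy : ∀ s : ℝ, ∀ y : ℝ, 0 < y → HasDerivAt (fun z => g z s) (gy y s) y)
    (hlip : ∀ K : Set (ℝ × ℝ), IsCompact K → K ⊆ Set.Ioi 0 ×ˢ Set.univ →
      ∃ L : ℝ, ∀ p ∈ K, ∀ q ∈ K, p.2 = q.2 →
        |g p.1 p.2 - g q.1 q.2| ≤ L * |p.1 - q.1|)
    (P₁ B : ℝ) (hP₁ : 0 < P₁) (hB : 0 < B)
    (hfoc : Paper.Aexp n l ^ 2 < 4 * B)
    (hconv : ∀ ε : ℝ, 0 < ε → ∃ δ : ℝ, 0 < δ ∧ ∃ S : ℝ, ∀ y s : ℝ,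
      |y - P₁| < δ → S < s → |gy y s - (B + Paper.Cexp n l)| < ε)
    (S₀ : ℝ) (yb1 yb2 yt1 yt2 : ℝ → ℝ)
    (hposb : ∀ s : ℝ, S₀ ≤ s → 0 < yb1 s)
    (hpost : ∀ s : ℝ, S₀ ≤ s → 0 < yt1 s)
    (hsysb : ∀ s : ℝ, S₀ ≤ s →
      HasDerivAt yb1 (Paper.mExp l * yb1 s + yb2 s) s ∧
      HasDerivAt yb2 (-(((n : ℝ) - 2 - Paper.mExp l) * yb2 s) - g (yb1 s) s) s)
    (hsyst : ∀ s : ℝ, S₀ ≤ s →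
      HasDerivAt yt1 (Paper.mExp l * yt1 s + yt2 s) s ∧
      HasDerivAt yt2 (-(((n : ℝ) - 2 - Paper.mExp l) * yt2 s) - g (yt1 s) s) s)
    (hdist : ∃ s : ℝ, S₀ ≤ s ∧ (yb1 s, yb2 s) ≠ (yt1 s, yt2 s))
    (hlimb : Tendsto (fun s => (yb1 s, yb2 s)) atTop
      (nhds (P₁, -Paper.mExp l * P₁)))
    (hlimt : Tendsto (fun s => (yt1 s, yt2 s)) atTop
      (nhds (P₁, -Paper.mExp l * P₁))) :
    ∀ T : ℝ, S₀ ≤ T →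
      (∃ s₁ : ℝ, T < s₁ ∧ yt1 s₁ < yb1 s₁) ∧
      (∃ s₂ : ℝ, T < s₂ ∧ yb1 s₂ < yt1 s₂) := by
  intro T hT
  have hlim1b : Tendsto yb1 atTop (nhds P₁) := by
    have h := (continuous_fst.tendsto (P₁, -Paper.mExp l * P₁)).comp hlimb
    exact h
  have hlim1t : Tendsto yt1 atTop (nhds P₁) := by
    have h := (continuous_fst.tendsto (P₁, -Paper.mExp l * P₁)).comp hlimt
    exact h
  have hgy' : ∀ s y : ℝ, 0 < y → HasDerivAt (fun z => g z s) (gy y s) y :=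
    fun s y hy => hgy s y hy
  have hfoc' : (((n : ℝ) - 2) - 2 * Paper.mExp l) ^ 2 < 4 * B := hfoc
  have hconv' : ∀ ε : ℝ, 0 < ε → ∃ δ : ℝ, 0 < δ ∧ ∃ S : ℝ, ∀ y s : ℝ,
      |y - P₁| < δ → S < s →
      |gy y s - (B + Paper.mExp l * (((n : ℝ) - 2) - Paper.mExp l))| < ε := hconv
  have hsysb' : ∀ s, S₀ ≤ s → HasDerivAt yb1 (Paper.mExp l * yb1 s + yb2 s) s ∧
      HasDerivAt yb2 (-((((n : ℝ) - 2) - Paper.mExp l) * yb2 s) - g (yb1 s) s) s := hsysb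
  have hsyst' : ∀ s, S₀ ≤ s → HasDerivAt yt1 (Paper.mExp l * yt1 s + yt2 s) s ∧
      HasDerivAt yt2 (-((((n : ℝ) - 2) - Paper.mExp l) * yt2 s) - g (yt1 s) s) s := hsyst
  have hdist' : ∃ s, S₀ ≤ s ∧ (yt1 s, yt2 s) ≠ (yb1 s, yb2 s) := by
    obtain ⟨s, hs, hne⟩ := hdist
    exact ⟨s, hs, hne.symm⟩
  constructor
  · exact cross_aux (Paper.mExp l) ((n : ℝ) - 2) g gy hgy' hlip P₁ B hB hfoc' hconv'
      S₀ yb1 yb2 yt1 yt2 hposb hpost hsysb' hsyst' hdist hlim1b hlim1t T hT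
  · exact cross_aux (Paper.mExp l) ((n : ℝ) - 2) g gy hgy' hlip P₁ B hB hfoc' hconv'
      S₀ yt1 yt2 yb1 yb2 hpost hposb hsyst' hsysb' hdist' hlim1t hlim1b T hT
end
end

section
/- Let n > 2 be an integer and f : [0,∞) × (0,∞) → [0,∞) locally Lipschitz. Let U₁, U₂ be positive C² solutions of the radial stationary equation U''(r) + ((n-1)/r)·U'(r) + f(U(r), r) = 0 on (0,∞) such that U₂(r) > U₁(r) for all sufficiently small r > 0, and suppose the set {R > 0 : U₂(R) = U₁(R)} is nonempty. Then Z := inf{R > 0 : U₂(R) = U₁(R)} satisfies Z > 0, U₂(r) > U₁(r) for all r ∈ (0, Z), U₂(Z) = U₁(Z), and U₂'(Z) < U₁'(Z). -/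
open Real Filter Set MeasureTheory

noncomputable section

set_option maxHeartbeats 1000000 in
/-- at the first crossing point `Z` of two ordered positive solutions of the
radial stationary equation, the solutions cross transversally: `U₂'(Z) < U₁'(Z)`. -/
theorem first_crossing_point_transversal
    (n : ℕ) (hn : 2 < n) (f : ℝ → ℝ → ℝ)
    (hflip : ∀ p : ℝ × ℝ, 0 ≤ p.1 → 0 < p.2 → ∃ K ε : ℝ, 0 < ε ∧
      ∀ a b : ℝ × ℝ, 0 ≤ a.1 → 0 < a.2 → 0 ≤ b.1 → 0 < b.2 →
        dist a p < ε → dist b p < ε → |f a.1 a.2 - f b.1 b.2| ≤ K * dist a b)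
    (hfnn : ∀ u r : ℝ, 0 ≤ u → 0 < r → 0 ≤ f u r)
    (U₁ U₁' U₂ U₂' : ℝ → ℝ)
    (h1pos : ∀ r : ℝ, 0 < r → 0 < U₁ r) (h2pos : ∀ r : ℝ, 0 < r → 0 < U₂ r)
    (h1 : Paper.SolOn n f U₁ U₁' (Set.Ioi 0))
    (h2 : Paper.SolOn n f U₂ U₂' (Set.Ioi 0))
    (hsmall : ∃ r₀ : ℝ, 0 < r₀ ∧ ∀ r : ℝ, 0 < r → r < r₀ → U₁ r < U₂ r)
    (hne : {R : ℝ | 0 < R ∧ U₂ R = U₁ R}.Nonempty) :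
    ∀ Z : ℝ, Z = sInf {R : ℝ | 0 < R ∧ U₂ R = U₁ R} →
      0 < Z ∧ (∀ r : ℝ, 0 < r → r < Z → U₁ r < U₂ r) ∧
        U₂ Z = U₁ Z ∧ U₂' Z < U₁' Z := by
  intro Z hZdef
  obtain ⟨r₀, hr₀, hsm⟩ := hsmall
  have hbdd : BddBelow {R : ℝ | 0 < R ∧ U₂ R = U₁ R} :=
    ⟨0, fun R hR => hR.1.le⟩
  have hr₀le : ∀ R ∈ {R : ℝ | 0 < R ∧ U₂ R = U₁ R}, r₀ ≤ R := by
    intro R hR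
    by_contra hlt
    push_neg at hlt
    exact absurd hR.2 (ne_of_gt (hsm R hR.1 hlt))
  have hZr₀ : r₀ ≤ Z := hZdef ▸ le_csInf hne hr₀le
  have hZpos : 0 < Z := lt_of_lt_of_le hr₀ hZr₀
  have hc1 : ∀ r : ℝ, 0 < r → ContinuousAt U₁ r := fun r hr => ((h1 r hr).1).continuousAt
  have hc2 : ∀ r : ℝ, 0 < r → ContinuousAt U₂ r := fun r hr => ((h2 r hr).1).continuousAt
  -- Part 2 : strict ordering on (0, Z)
  have part2 : ∀ r : ℝ, 0 < r → r < Z → U₁ r < U₂ r := by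
    intro r hr hrZ
    by_contra hle
    push_neg at hle
    have hne' : U₂ r ≠ U₁ r := by
      intro heq
      have : Z ≤ r := hZdef ▸ csInf_le hbdd ⟨hr, heq⟩
      linarith
    have hlt : U₂ r < U₁ r := lt_of_le_of_ne hle hne'
    set t := min r r₀ / 2 with ht
    have ht0 : 0 < t := by positivity
    have htr : t < r := by
      have := min_le_left r r₀; simp only [ht]; linarith
    have htr₀ : t < r₀ := by
      have := min_le_right r r₀; simp only [ht]; linarith
    have hht : U₁ t < U₂ t := hsm t ht0 htr₀
    have hcont : ContinuousOn (fun x => U₂ x - U₁ x) (Set.Icc t r) := by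
      intro x hx
      exact (((hc2 x (lt_of_lt_of_le ht0 hx.1)).sub
        (hc1 x (lt_of_lt_of_le ht0 hx.1))).continuousWithinAt)
    have hmem : (0:ℝ) ∈ Set.Icc (U₂ r - U₁ r) (U₂ t - U₁ t) :=
      ⟨by linarith, by linarith⟩
    obtain ⟨c, hc, hc0⟩ := intermediate_value_Icc' htr.le hcont hmem
    have hc0' : U₂ c = U₁ c := by
      have := sub_eq_zero.mp hc0
      exact this
    have hcpos : 0 < c := lt_of_lt_of_le ht0 hc.1
    have : Z ≤ c := hZdef ▸ csInf_le hbdd ⟨hcpos, hc0'⟩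
    linarith [hc.2]
  -- Part 3 : equality at Z
  have hZeq : U₂ Z = U₁ Z := by
    have hclos : Z ∈ closure {R : ℝ | 0 < R ∧ U₂ R = U₁ R} :=
      hZdef ▸ (isGLB_csInf hne hbdd).mem_closure hne
    obtain ⟨x, hx, hlim⟩ := mem_closure_iff_seq_limit.mp hclos
    have h2lim : Tendsto (fun k => U₂ (x k)) atTop (nhds (U₂ Z)) :=
      ((hc2 Z hZpos).tendsto).comp hlim
    have h1lim : Tendsto (fun k => U₁ (x k)) atTop (nhds (U₁ Z)) :=
      ((hc1 Z hZpos).tendsto).comp hlim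
    have heq : (fun k => U₂ (x k)) = fun k => U₁ (x k) :=
      funext fun k => (hx k).2
    exact tendsto_nhds_unique (heq ▸ h2lim) h1lim
  refine ⟨hZpos, part2, hZeq, ?_⟩
  -- Part 4 : transversality
  set W : ℝ → ℝ := fun r => U₂ r - U₁ r with hWdef
  set W' : ℝ → ℝ := fun r => U₂' r - U₁' r with hW'def
  have hWd : ∀ r : ℝ, 0 < r → HasDerivAt W (W' r) r :=
    fun r hr => ((h2 r hr).1.sub (h1 r hr).1)
  set W'' : ℝ → ℝ :=
    fun r => -(((n:ℝ) - 1) / r * W' r + (f (U₂ r) r - f (U₁ r) r)) with hW''def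
  have hW'd : ∀ r : ℝ, 0 < r → HasDerivAt W' (W'' r) r := by
    intro r hr
    have h := (h2 r hr).2.sub (h1 r hr).2
    refine h.congr_deriv ?_
    simp only [hW''def, hW'def]
    ring
  have hWZ : W Z = 0 := sub_eq_zero.mpr hZeq
  -- W' Z ≤ 0
  have hW'Zle : W' Z ≤ 0 := by
    have hslope : Tendsto (slope W Z) (nhdsWithin Z (Set.Iio Z)) (nhds (W' Z)) :=
      (hasDerivAt_iff_tendsto_slope.mp (hWd Z hZpos)).mono_left
        (nhdsWithin_mono _ fun x hx => ne_of_lt hx)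
    refine le_of_tendsto hslope ?_
    have hev : ∀ᶠ r in nhdsWithin Z (Set.Iio Z), 0 < r :=
      eventually_nhdsWithin_of_eventually_nhds (eventually_gt_nhds hZpos)
    filter_upwards [hev, self_mem_nhdsWithin] with r hr hrZ
    have hrZ' : r < Z := hrZ
    have hWr : 0 < W r := sub_pos.mpr (part2 r hr hrZ')
    rw [slope_def_field, hWZ]
    have : (W r - 0) / (r - Z) ≤ 0 :=
      div_nonpos_of_nonneg_of_nonpos (by linarith) (by linarith)
    simpa [div_eq_inv_mul] using this
  by_contra hcon
  push_neg at hcon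
  have hW'Z : W' Z = 0 := le_antisymm hW'Zle (by simp only [hW'def]; linarith)
  -- Lipschitz data at (U₁ Z, Z)
  obtain ⟨K, ε, hε, hK⟩ := hflip (U₁ Z, Z) (h1pos Z hZpos).le hZpos
  -- choose δ
  have hev : ∀ᶠ r in nhds Z, Z / 2 < r ∧ |U₁ r - U₁ Z| < ε ∧ |U₂ r - U₁ Z| < ε ∧ |r - Z| < ε := by
    have e1 : ∀ᶠ r in nhds Z, Z / 2 < r := eventually_gt_nhds (by linarith)
    have e2 : ∀ᶠ r in nhds Z, |U₁ r - U₁ Z| < ε := by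
      have := (hc1 Z hZpos).tendsto
      have := Metric.tendsto_nhds.mp this ε hε
      simpa [Real.dist_eq] using this
    have e3 : ∀ᶠ r in nhds Z, |U₂ r - U₁ Z| < ε := by
      have := (hc2 Z hZpos).tendsto
      rw [hZeq] at this
      have := Metric.tendsto_nhds.mp this ε hε
      simpa [Real.dist_eq] using this
    have e4 : ∀ᶠ r in nhds Z, |r - Z| < ε := by
      have := Metric.tendsto_nhds.mp (tendsto_id (x := nhds Z)) ε hε
      simpa [Real.dist_eq] using this
    filter_upwards [e1, e2, e3, e4] with r h1' h2' h3' h4' using ⟨h1', h2', h3', h4'⟩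
  obtain ⟨δ, hδ, hball⟩ := Metric.eventually_nhds_iff.mp hev
  set a := Z - δ / 2 with hadef
  have haZ : a < Z := by simp only [hadef]; linarith
  have hP : ∀ r ∈ Set.Icc a Z,
      Z / 2 < r ∧ |U₁ r - U₁ Z| < ε ∧ |U₂ r - U₁ Z| < ε ∧ |r - Z| < ε := by
    intro r hr
    apply hball
    rw [Real.dist_eq, abs_sub_lt_iff]
    constructor
    · linarith [hr.2]
    · have := hr.1; simp only [hadef] at this; linarith
  have ha0 : 0 < a := by
    have h' := (hP a ⟨le_refl a, haZ.le⟩).1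
    have hZ2 : 0 < Z / 2 := by linarith
    exact lt_trans hZ2 h'
  -- the pointwise Lipschitz bound
  set C : ℝ := |K| + 2 * (n:ℝ) / Z with hCdef
  have hC0 : 0 ≤ C := by
    have h' : 0 ≤ 2 * (n:ℝ) / Z := by positivity
    simp only [hCdef]; linarith [abs_nonneg K]
  have hbound : ∀ r ∈ Set.Icc a Z, |W'' r| ≤ C * (|W r| + |W' r|) := by
    intro r hr
    obtain ⟨hr2, hU1, hU2, hrε⟩ := hP r hr
    have hr0 : 0 < r := by linarith
    have hdistf : |f (U₂ r) r - f (U₁ r) r| ≤ K * |W r| := by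
      have hd2 : dist ((U₂ r, r) : ℝ × ℝ) (U₁ Z, Z) < ε := by
        rw [Prod.dist_eq]
        simp only [Real.dist_eq]
        exact max_lt hU2 hrε
      have hd1 : dist ((U₁ r, r) : ℝ × ℝ) (U₁ Z, Z) < ε := by
        rw [Prod.dist_eq]
        simp only [Real.dist_eq]
        exact max_lt hU1 hrε
      have := hK (U₂ r, r) (U₁ r, r) (h2pos r hr0).le hr0 (h1pos r hr0).le hr0 hd2 hd1
      have hdd : dist ((U₂ r, r) : ℝ × ℝ) (U₁ r, r) = |W r| := by
        rw [Prod.dist_eq]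
        simp only [Real.dist_eq, sub_self, abs_zero, hWdef]
        exact max_eq_left (abs_nonneg _)
      rwa [hdd] at this
    have hfrac : ((n:ℝ) - 1) / r ≤ 2 * (n:ℝ) / Z := by
      rw [div_le_div_iff₀ hr0 hZpos]
      have hn3 : (3:ℝ) ≤ (n:ℝ) := by exact_mod_cast hn
      nlinarith
    have hfrac0 : 0 ≤ ((n:ℝ) - 1) / r := by
      have hn3 : (3:ℝ) ≤ (n:ℝ) := by exact_mod_cast hn
      exact div_nonneg (by linarith) hr0.le
    calc |W'' r| ≤ |((n:ℝ) - 1) / r * W' r| + |f (U₂ r) r - f (U₁ r) r| := by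
          simp only [hW''def, abs_neg]
          exact abs_add_le _ _
      _ ≤ (2 * (n:ℝ) / Z) * |W' r| + |K| * |W r| := by
          gcongr
          · rw [abs_mul, abs_of_nonneg hfrac0]
            exact mul_le_mul_of_nonneg_right hfrac (abs_nonneg _)
          · exact hdistf.trans (mul_le_mul_of_nonneg_right (le_abs_self K) (abs_nonneg _))
      _ ≤ C * (|W r| + |W' r|) := by
          simp only [hCdef]
          have h1' : 0 ≤ |W r| := abs_nonneg _
          have h2' : 0 ≤ |W' r| := abs_nonneg _
          have h3' : 0 ≤ 2 * (n:ℝ) / Z := by positivity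
          nlinarith [abs_nonneg K]
  -- energy function
  set E : ℝ → ℝ := fun r => W r ^ 2 + W' r ^ 2 with hEdef
  set E' : ℝ → ℝ := fun r => 2 * W r * W' r + 2 * W' r * W'' r with hE'def
  have hEd : ∀ r : ℝ, 0 < r → HasDerivAt E (E' r) r := by
    intro r hr
    have h := ((hWd r hr).pow 2).add ((hW'd r hr).pow 2)
    refine h.congr_deriv ?_
    simp only [hE'def]
    push_cast
    ring
  set L : ℝ := 1 + 3 * C with hLdef
  have hEbound : ∀ r ∈ Set.Icc a Z, -(L * E r) ≤ E' r := by
    intro r hr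
    have hb := hbound r hr
    have hA : -(|W r| * |W' r|) ≤ W r * W' r := by
      calc -(|W r| * |W' r|) = -|W r * W' r| := by rw [abs_mul]
        _ ≤ W r * W' r := neg_abs_le _
    have hB : -(|W' r| * |W'' r|) ≤ W' r * W'' r := by
      calc -(|W' r| * |W'' r|) = -|W' r * W'' r| := by rw [abs_mul]
        _ ≤ W' r * W'' r := neg_abs_le _
    have s1 := sq_abs (W r)
    have s2 := sq_abs (W' r)
    have n1 := abs_nonneg (W r)
    have n2 := abs_nonneg (W' r)
    have n3 := abs_nonneg (W'' r)
    simp only [hE'def, hEdef, hLdef]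
    nlinarith [sq_nonneg (|W r| - |W' r|), sq_nonneg (|W r| + |W' r|),
      mul_le_mul_of_nonneg_left hb n2]
  set g : ℝ → ℝ := fun r => E r * Real.exp (L * r) with hgdef
  have hgd : ∀ r : ℝ, 0 < r → HasDerivAt g ((E' r + L * E r) * Real.exp (L * r)) r := by
    intro r hr
    have hlin : HasDerivAt (fun x : ℝ => L * x) L r := by
      simpa using (hasDerivAt_id r).const_mul L
    have hexp : HasDerivAt (fun x : ℝ => Real.exp (L * x)) (Real.exp (L * r) * L) r :=
      (Real.hasDerivAt_exp (L * r)).comp r hlin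
    have h := (hEd r hr).mul hexp
    have heq : E' r * Real.exp (L * r) + E r * (Real.exp (L * r) * L)
        = (E' r + L * E r) * Real.exp (L * r) := by ring
    exact heq ▸ h
  have hsub : Set.Icc a Z ⊆ Set.Ioi (0:ℝ) := fun x hx => lt_of_lt_of_le ha0 hx.1
  have hmono : MonotoneOn g (Set.Icc a Z) := by
    apply monotoneOn_of_deriv_nonneg (convex_Icc a Z)
    · intro x hx
      exact (hgd x (hsub hx)).continuousAt.continuousWithinAt
    · intro x hx
      rw [interior_Icc] at hx
      exact (hgd x (lt_of_lt_of_le ha0 hx.1.le)).differentiableAt.differentiableWithinAt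
    · intro x hx
      rw [interior_Icc] at hx
      have hx0 : 0 < x := lt_of_lt_of_le ha0 hx.1.le
      rw [(hgd x hx0).deriv]
      have hEb := hEbound x ⟨hx.1.le, hx.2.le⟩
      have : 0 ≤ E' x + L * E x := by linarith
      positivity
  have hgZ : g Z = 0 := by
    simp only [hgdef, hEdef, hWZ, hW'Z]
    ring
  have hga : 0 < g a := by
    have hWa : 0 < W a := sub_pos.mpr (part2 a ha0 haZ)
    have hEa : 0 < E a := by
      simp only [hEdef]
      nlinarith [sq_nonneg (W' a)]
    simp only [hgdef]
    positivity
  have := hmono ⟨le_refl a, haZ.le⟩ ⟨haZ.le, le_refl Z⟩ haZ.le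
  rw [hgZ] at this
  linarith
end
end
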